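/- For k ≥ 1 let h_k denote the number of maximal Riviera configurations of any length having exactly k occupied lots (the cardinality of the finite set of pairs (n, c) with c a maximal Riviera configuration of length n with exactly k occupied lots). Then h_1 = 1, h_2 = 5, h_3 = 5, and for every k ≥ 4 one has h_k + h_{k−3} = h_{k−1} + 2·h_{k−2} (equivalently, h_k = h_{k−1} + 2h_{k−2} − h_{k−3}). -/

import Mathlib

/-- A Riviera configuration of length `n`: zero-padded outside `{0, …, n−1}`. -/
def RivieraConfig (n : ℕ) (c : ℤ → Bool) : Prop :=
  ∀ j : ℤ, j < 0 ∨ (n : ℤ) ≤ j → c j = false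

/-- Permissibility: no occupied lot has both neighbors occupied. -/
def RivieraPermissible (c : ℤ → Bool) : Prop :=
  ¬ ∃ i : ℤ, c (i - 1) = true ∧ c i = true ∧ c (i + 1) = true

/-- Maximality: permissible and no house can be added. -/
def RivieraMaximal (n : ℕ) (c : ℤ → Bool) : Prop :=
  RivieraPermissible c ∧
    ∀ j : ℤ, 0 ≤ j → j < (n : ℤ) → c j = false →
      ¬ RivieraPermissible (Function.update c j true)

/-- The number of occupied lots of a configuration of length `n`. -/
noncomputable def rivieraOccupancy (n : ℕ) (c : ℤ → Bool) : ℕ :=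
  ((Finset.Ico (0 : ℤ) (n : ℤ)).filter fun j => c j = true).card

def OkP (k : ℕ) (p : ℕ × (ℤ → Bool)) : Prop :=
  RivieraConfig p.1 p.2 ∧ RivieraMaximal p.1 p.2 ∧ rivieraOccupancy p.1 p.2 = k

def LocalGood (c : ℤ → Bool) (j : ℤ) : Prop :=
  (c (j-2) = true ∧ c (j-1) = true) ∨ (c (j-1) = true ∧ c (j+1) = true) ∨
    (c (j+1) = true ∧ c (j+2) = true)

lemma notPerm_update_iff (c : ℤ → Bool) (j : ℤ) (hperm : RivieraPermissible c) :
    ¬ RivieraPermissible (Function.update c j true) ↔ LocalGood c j := by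
  constructor
  · intro h
    rw [RivieraPermissible, not_not] at h
    obtain ⟨i, h1, h2, h3⟩ := h
    have hij : i - 1 = j ∨ i = j ∨ i + 1 = j := by
      by_contra hcon
      push_neg at hcon
      obtain ⟨e1, e2, e3⟩ := hcon
      refine hperm ⟨i, ?_, ?_, ?_⟩
      · rwa [Function.update_of_ne e1] at h1
      · rwa [Function.update_of_ne e2] at h2
      · rwa [Function.update_of_ne e3] at h3
    rcases hij with hh | hh | hh
    · right; right
      constructor
      · have h2' := h2; rw [Function.update_of_ne (by omega : i ≠ j)] at h2'
        rwa [show j + 1 = i by omega]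
      · have h3' := h3; rw [Function.update_of_ne (by omega : i + 1 ≠ j)] at h3'
        rwa [show j + 2 = i + 1 by omega]
    · right; left
      constructor
      · have h1' := h1; rw [Function.update_of_ne (by omega : i - 1 ≠ j)] at h1'
        rwa [show j - 1 = i - 1 by omega]
      · have h3' := h3; rw [Function.update_of_ne (by omega : i + 1 ≠ j)] at h3'
        rwa [show j + 1 = i + 1 by omega]
    · left
      constructor
      · have h1' := h1; rw [Function.update_of_ne (by omega : i - 1 ≠ j)] at h1'
        rwa [show j - 2 = i - 1 by omega]
      · have h2' := h2; rw [Function.update_of_ne (by omega : i ≠ j)] at h2'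
        rwa [show j - 1 = i by omega]
  · intro lg
    rw [RivieraPermissible, not_not]
    rcases lg with ⟨ha, hb⟩ | ⟨ha, hb⟩ | ⟨ha, hb⟩
    · refine ⟨j - 1, ?_, ?_, ?_⟩
      · rw [Function.update_of_ne (by omega : j - 1 - 1 ≠ j), show j - 1 - 1 = j - 2 by omega]
        exact ha
      · rw [Function.update_of_ne (by omega : j - 1 ≠ j)]; exact hb
      · rw [show j - 1 + 1 = j by omega, Function.update_self]
    · refine ⟨j, ?_, ?_, ?_⟩
      · rw [Function.update_of_ne (by omega : j - 1 ≠ j)]; exact ha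
      · rw [Function.update_self]
      · rw [Function.update_of_ne (by omega : j + 1 ≠ j)]; exact hb
    · refine ⟨j + 1, ?_, ?_, ?_⟩
      · rw [show j + 1 - 1 = j by omega, Function.update_self]
      · rw [Function.update_of_ne (by omega : j + 1 ≠ j)]; exact ha
      · rw [Function.update_of_ne (by omega : j + 1 + 1 ≠ j), show j + 1 + 1 = j + 2 by omega]
        exact hb

lemma rivMaximal_iff {n : ℕ} {c : ℤ → Bool} (hperm : RivieraPermissible c) :
    RivieraMaximal n c ↔ ∀ j : ℤ, 0 ≤ j → j < (n:ℤ) → c j = false → LocalGood c j := by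
  constructor
  · rintro ⟨-, h⟩ j h0 h1 hj
    exact (notPerm_update_iff c j hperm).1 (h j h0 h1 hj)
  · intro h
    exact ⟨hperm, fun j h0 h1 hj => (notPerm_update_iff c j hperm).2 (h j h0 h1 hj)⟩

lemma true_range {n : ℕ} {c : ℤ → Bool} (hcfg : RivieraConfig n c) {x : ℤ}
    (hx : c x = true) : 0 ≤ x ∧ x < (n:ℤ) := by
  constructor <;> by_contra h <;> simp [hcfg x (by omega)] at hx

lemma occ_succ (n : ℕ) (c : ℤ → Bool) :
    rivieraOccupancy (n+1) c = rivieraOccupancy n c + (if c (n:ℤ) = true then 1 else 0) := by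
  unfold rivieraOccupancy
  have h : Finset.Ico (0:ℤ) ((n+1 : ℕ) : ℤ) = insert (n:ℤ) (Finset.Ico (0:ℤ) (n:ℤ)) := by
    ext x; simp only [Finset.mem_Ico, Finset.mem_insert]; push_cast; omega
  rw [h, Finset.filter_insert]
  by_cases hc : c (n:ℤ) = true
  · rw [if_pos hc, if_pos hc, Finset.card_insert_of_notMem (by simp)]
  · rw [if_neg hc, if_neg hc, add_zero]

lemma occ_congr (n : ℕ) {c d : ℤ → Bool} (h : ∀ x, 0 ≤ x → x < (n:ℤ) → c x = d x) :
    rivieraOccupancy n c = rivieraOccupancy n d := by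
  unfold rivieraOccupancy
  congr 1
  apply Finset.filter_congr
  intro x hx
  simp only [Finset.mem_Ico] at hx
  rw [h x hx.1 hx.2]

lemma occ_le (n : ℕ) (c : ℤ → Bool) : rivieraOccupancy n c ≤ n := by
  have : rivieraOccupancy n c ≤ (Finset.Ico (0:ℤ) (n:ℤ)).card := Finset.card_filter_le _ _
  rwa [Int.card_Ico, show ((n:ℤ) - 0).toNat = n by omega] at this

lemma n_le_of_ok {k : ℕ} {p : ℕ × (ℤ → Bool)} (hp : OkP k p) : p.1 ≤ 3 * k := by
  classical
  obtain ⟨hcfg, hmax, hocc⟩ := hp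
  have hlg := (rivMaximal_iff hmax.1).1 hmax
  set n := p.1
  set c := p.2
  set f : ℤ → ℤ := fun j => if c j = true then j else if c (j-1) = true then j - 1 else j + 1
    with hf
  have hmt : ∀ a ∈ Finset.Ico (0:ℤ) (n:ℤ),
      f a ∈ (Finset.Ico (0:ℤ) (n:ℤ)).filter (fun j => c j = true) := by
    intro a ha
    rw [Finset.mem_Ico] at ha
    by_cases hca : c a = true
    · simp only [hf, if_pos hca]
      simp [Finset.mem_filter, Finset.mem_Ico, ha.1, ha.2, hca]
    · have hca' : c a = false := by simpa using hca
      have lg := hlg a ha.1 ha.2 hca'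
      by_cases hm1 : c (a-1) = true
      · simp only [hf, if_neg hca, if_pos hm1]
        have := true_range hcfg hm1
        simp [Finset.mem_filter, Finset.mem_Ico, this.1, this.2, hm1]; omega
      · have hp1 : c (a+1) = true := by
          rcases lg with ⟨u, v⟩ | ⟨u, v⟩ | ⟨u, v⟩ <;> first | exact (hm1 v).elim | exact (hm1 u).elim | exact u
        simp only [hf, if_neg hca, if_neg hm1]
        have := true_range hcfg hp1
        simp [Finset.mem_filter, Finset.mem_Ico, this.1, this.2, hp1]
  have hfib : ∀ b ∈ (Finset.Ico (0:ℤ) (n:ℤ)).filter (fun j => c j = true),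
      ((Finset.Ico (0:ℤ) (n:ℤ)).filter (fun a => f a = b)).card ≤ 3 := by
    intro b _
    have hsub : (Finset.Ico (0:ℤ) (n:ℤ)).filter (fun a => f a = b) ⊆
        ({b-1, b, b+1} : Finset ℤ) := by
      intro x hx
      rw [Finset.mem_filter] at hx
      have hfx := hx.2
      simp only [hf] at hfx
      simp only [Finset.mem_insert, Finset.mem_singleton]
      split_ifs at hfx <;> omega
    calc ((Finset.Ico (0:ℤ) (n:ℤ)).filter (fun a => f a = b)).card
        ≤ ({b-1, b, b+1} : Finset ℤ).card := Finset.card_le_card hsub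
      _ ≤ 3 := by
          have h1 := Finset.card_insert_le (b-1) ({b, b+1} : Finset ℤ)
          have h2 := Finset.card_insert_le b ({b+1} : Finset ℤ)
          have h3 : ({b+1} : Finset ℤ).card = 1 := Finset.card_singleton _
          omega
  have := Finset.card_le_mul_card_image_of_maps_to hmt 3 hfib
  rw [Int.card_Ico, show ((n:ℤ) - 0).toNat = n by omega] at this
  have hocc' : ((Finset.Ico (0:ℤ) (n:ℤ)).filter (fun j => c j = true)).card = k := hocc
  omega

instance okFinite (k : ℕ) : Finite {p : ℕ × (ℤ → Bool) // OkP k p} := by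
  apply Finite.of_injective
    (fun q => ((⟨q.1.1, by have := n_le_of_ok q.2; omega⟩ : Fin (3*k+1)),
      fun i : Fin (3*k+1) => q.1.2 ((i : ℕ) : ℤ)))
  rintro ⟨⟨n₁, c₁⟩, h₁⟩ ⟨⟨n₂, c₂⟩, h₂⟩ heq
  rw [Prod.ext_iff] at heq
  obtain ⟨hn, hc⟩ := heq
  simp only [Fin.mk.injEq] at hn
  have hcc : ∀ i : Fin (3*k+1), c₁ ((i:ℕ):ℤ) = c₂ ((i:ℕ):ℤ) := fun i => congrFun hc i
  apply Subtype.ext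
  have hb1 := n_le_of_ok h₁
  simp only at hb1
  refine Prod.ext hn (funext fun j => ?_)
  show c₁ j = c₂ j
  by_cases hr : 0 ≤ j ∧ j < (n₁:ℤ)
  · have hj : j.toNat < 3*k+1 := by omega
    have := hcc ⟨j.toNat, hj⟩
    simpa [Int.toNat_of_nonneg hr.1] using this
  · push_neg at hr
    have e1 : c₁ j = false := h₁.1 j (by omega)
    have e2 : c₂ j = false := h₂.1 j (by rw [show (n₂:ℤ) = (n₁:ℤ) by rw [hn]]; omega)
    rw [e1, e2]
-- continuation
def lastT (p : ℕ × (ℤ → Bool)) : Prop := p.2 ((p.1:ℤ) - 1) = true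
def sndT (p : ℕ × (ℤ → Bool)) : Prop := p.2 ((p.1:ℤ) - 2) = true

def TP (k : ℕ) (p : ℕ × (ℤ → Bool)) : Prop := OkP k p ∧ lastT p
def CP (k : ℕ) (p : ℕ × (ℤ → Bool)) : Prop := OkP k p ∧ ¬ lastT p
def BP (k : ℕ) (p : ℕ × (ℤ → Bool)) : Prop := TP k p ∧ sndT p
def AP (k : ℕ) (p : ℕ × (ℤ → Bool)) : Prop := TP k p ∧ ¬ sndT p

lemma card_split {α : Type*} (P Q : α → Prop) [Finite {a // P a}] :
    Nat.card {a // P a} = Nat.card {a // P a ∧ Q a} + Nat.card {a // P a ∧ ¬ Q a} := by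
  classical
  haveI f1 : Finite {a // P a ∧ Q a} := Finite.of_injective
    (fun q => (⟨q.1, q.2.1⟩ : {a // P a})) (fun a b h => by have h2 := congrArg Subtype.val h; exact Subtype.ext h2)
  haveI f2 : Finite {a // P a ∧ ¬ Q a} := Finite.of_injective
    (fun q => (⟨q.1, q.2.1⟩ : {a // P a})) (fun a b h => by have h2 := congrArg Subtype.val h; exact Subtype.ext h2)
  have e1 : {a // P a ∧ Q a} ≃ {x : {a // P a} // Q x.1} :=
    (Equiv.subtypeSubtypeEquivSubtypeInter P Q).symm
  have e2 : {a // P a ∧ ¬ Q a} ≃ {x : {a // P a} // ¬ Q x.1} :=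
    (Equiv.subtypeSubtypeEquivSubtypeInter P (fun a => ¬ Q a)).symm
  have e3 : {x : {a // P a} // Q x.1} ⊕ {x : {a // P a} // ¬ Q x.1} ≃ {a // P a} :=
    Equiv.sumCompl _
  rw [Nat.card_congr (e3.symm.trans (Equiv.sumCongr e1.symm e2.symm)), Nat.card_sum]

instance (k : ℕ) : Finite {p : ℕ × (ℤ → Bool) // TP k p} := Finite.of_injective
  (fun q => (⟨q.1, q.2.1⟩ : {p // OkP k p})) (fun a b h => by have h2 := congrArg Subtype.val h; exact Subtype.ext h2)
instance (k : ℕ) : Finite {p : ℕ × (ℤ → Bool) // CP k p} := Finite.of_injective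
  (fun q => (⟨q.1, q.2.1⟩ : {p // OkP k p})) (fun a b h => by have h2 := congrArg Subtype.val h; exact Subtype.ext h2)
instance (k : ℕ) : Finite {p : ℕ × (ℤ → Bool) // BP k p} := Finite.of_injective
  (fun q => (⟨q.1, q.2.1.1⟩ : {p // OkP k p})) (fun a b h => by have h2 := congrArg Subtype.val h; exact Subtype.ext h2)
instance (k : ℕ) : Finite {p : ℕ × (ℤ → Bool) // AP k p} := Finite.of_injective
  (fun q => (⟨q.1, q.2.1.1⟩ : {p // OkP k p})) (fun a b h => by have h2 := congrArg Subtype.val h; exact Subtype.ext h2)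

lemma hsplit (k : ℕ) : Nat.card {p : ℕ × (ℤ → Bool) // OkP k p} =
    Nat.card {p : ℕ × (ℤ → Bool) // TP k p} + Nat.card {p : ℕ × (ℤ → Bool) // CP k p} :=
  card_split (OkP k) lastT

lemma tsplit (k : ℕ) : Nat.card {p : ℕ × (ℤ → Bool) // TP k p} =
    Nat.card {p : ℕ × (ℤ → Bool) // BP k p} + Nat.card {p : ℕ × (ℤ → Bool) // AP k p} :=
  card_split (TP k) sndT

/-! ### truncation and extension -/

def trunc (m : ℕ) (c : ℤ → Bool) : ℤ → Bool := fun j => if j < (m:ℤ) then c j else false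

def ext2 (d : ℤ → Bool) (a b : ℤ) : ℤ → Bool := fun j => d j || decide (j = a) || decide (j = b)

lemma trunc_lt {m : ℕ} {c : ℤ → Bool} {j : ℤ} (h : j < (m:ℤ)) : trunc m c j = c j :=
  if_pos h
lemma trunc_ge {m : ℕ} {c : ℤ → Bool} {j : ℤ} (h : (m:ℤ) ≤ j) : trunc m c j = false :=
  if_neg (by omega)

lemma ext2_eq {d : ℤ → Bool} {a b j : ℤ} (ha : j ≠ a) (hb : j ≠ b) : ext2 d a b j = d j := by
  simp [ext2, ha, hb]

lemma ext2_true_iff {d : ℤ → Bool} {a b j : ℤ} :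
    ext2 d a b j = true ↔ d j = true ∨ j = a ∨ j = b := by
  simp [ext2, Bool.or_eq_true, decide_eq_true_iff, or_assoc]

lemma localgood_mono {c e : ℤ → Bool} (h : ∀ x, c x = true → e x = true) {j : ℤ} :
    LocalGood c j → LocalGood e j := by
  rintro (⟨h1, h2⟩ | ⟨h1, h2⟩ | ⟨h1, h2⟩)
  · exact Or.inl ⟨h _ h1, h _ h2⟩
  · exact Or.inr (Or.inl ⟨h _ h1, h _ h2⟩)
  · exact Or.inr (Or.inr ⟨h _ h1, h _ h2⟩)

lemma perm_mono {c e : ℤ → Bool} (h : ∀ x, e x = true → c x = true) :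
    RivieraPermissible c → RivieraPermissible e := fun hp ⟨i, h1, h2, h3⟩ =>
  hp ⟨i, h _ h1, h _ h2, h _ h3⟩

lemma trunc_le (m : ℕ) (c : ℤ → Bool) : ∀ x, trunc m c x = true → c x = true := by
  intro x hx
  unfold trunc at hx
  split at hx
  · exact hx
  · exact absurd hx (by simp)

lemma ext2_ge (d : ℤ → Bool) (a b : ℤ) : ∀ x, d x = true → ext2 d a b x = true := by
  intro x hx; simp [ext2, hx]

lemma trunc_config {n m : ℕ} {c : ℤ → Bool} (hcfg : RivieraConfig n c) :
    RivieraConfig m (trunc m c) := by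
  intro j hj
  unfold trunc
  split
  · rcases hj with hj | hj
    · exact hcfg j (Or.inl hj)
    · omega
  · rfl

lemma trunc_perm {m : ℕ} {c : ℤ → Bool} (hp : RivieraPermissible c) :
    RivieraPermissible (trunc m c) := perm_mono (trunc_le m c) hp

lemma trunc_occ (m : ℕ) (c : ℤ → Bool) : rivieraOccupancy m (trunc m c) = rivieraOccupancy m c :=
  occ_congr m (fun x _ hx => trunc_lt hx)

lemma trunc_localgood {c : ℤ → Bool} {m : ℕ} (hm : c (m:ℤ) = false) {j : ℤ}
    (hjm : j ≤ (m:ℤ) - 2) (hlg : LocalGood c j) : LocalGood (trunc m c) j := by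
  have key : ∀ p : ℤ, p ≤ (m:ℤ) → c p = true → trunc m c p = true := by
    intro p h1 h2
    have hne : p ≠ (m:ℤ) := fun h => by rw [h, hm] at h2; exact absurd h2 (by simp)
    rw [trunc_lt (by omega)]; exact h2
  rcases hlg with ⟨h1, h2⟩ | ⟨h1, h2⟩ | ⟨h1, h2⟩
  · exact Or.inl ⟨key _ (by omega) h1, key _ (by omega) h2⟩
  · exact Or.inr (Or.inl ⟨key _ (by omega) h1, key _ (by omega) h2⟩)
  · exact Or.inr (Or.inr ⟨key _ (by omega) h1, key _ (by omega) h2⟩)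
lemma bnot_true {b : Bool} (h : ¬ b = true) : b = false := by
  cases b
  · rfl
  · exact absurd rfl h

lemma C_to_B {k : ℕ} (hk : 1 ≤ k) {n : ℕ} {c : ℤ → Bool} (h : CP k (n, c)) :
    BP k (n - 1, c) := by
  obtain ⟨⟨hcfg, hmax, hocc⟩, hlast⟩ := h
  dsimp only at hcfg hmax hocc
  have hfalse : c ((n:ℤ) - 1) = false := bnot_true hlast
  have hn1 : 1 ≤ n := le_trans hk (hocc ▸ occ_le n c)
  have hlg := (rivMaximal_iff hmax.1).1 hmax
  have lg := hlg ((n:ℤ) - 1) (by omega) (by omega) hfalse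
  have e0 : c ((n:ℤ) - 1 + 1) = false := hcfg _ (Or.inr (by omega))
  have e1 : c ((n:ℤ) - 1 + 2) = false := hcfg _ (Or.inr (by omega))
  have hc2 : c ((n:ℤ) - 2) = true ∧ c ((n:ℤ) - 3) = true := by
    rcases lg with ⟨u, v⟩ | ⟨u, v⟩ | ⟨u, v⟩
    · constructor
      · rwa [show (n:ℤ) - 1 - 1 = (n:ℤ) - 2 by ring] at v
      · rwa [show (n:ℤ) - 1 - 2 = (n:ℤ) - 3 by ring] at u
    · rw [e0] at v; exact absurd v (by simp)
    · rw [e0] at u; exact absurd u (by simp)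
  obtain ⟨hc2, hc3⟩ := hc2
  have hn3 : 3 ≤ n := by have := (true_range hcfg hc3).1; omega
  have hcast : ((n - 1 : ℕ) : ℤ) = (n:ℤ) - 1 := by omega
  refine ⟨⟨⟨?_, ?_, ?_⟩, ?_⟩, ?_⟩
  · -- config
    intro j hj
    rw [hcast] at hj
    rcases hj with hj | hj
    · exact hcfg j (Or.inl hj)
    · by_cases hje : j = (n:ℤ) - 1
      · rw [hje]; exact hfalse
      · exact hcfg j (Or.inr (by omega))
  · -- maximal
    rw [rivMaximal_iff hmax.1]
    intro j h0 h1 hj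
    rw [hcast] at h1
    exact hlg j h0 (by omega) hj
  · -- occupancy
    show rivieraOccupancy (n-1) c = k
    have o1 := occ_succ (n - 1) c
    rw [show n - 1 + 1 = n by omega, hcast, if_neg (by rw [hfalse]; simp)] at o1
    omega
  · -- lastT
    show c (((n-1:ℕ):ℤ) - 1) = true
    rw [show ((n-1:ℕ):ℤ) - 1 = (n:ℤ) - 2 by omega]
    exact hc2
  · -- sndT
    show c (((n-1:ℕ):ℤ) - 2) = true
    rw [show ((n-1:ℕ):ℤ) - 2 = (n:ℤ) - 3 by omega]
    exact hc3

lemma B_to_C {k : ℕ} {m : ℕ} {d : ℤ → Bool} (h : BP k (m, d)) : CP k (m + 1, d) := by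
  obtain ⟨⟨⟨hcfg, hmax, hocc⟩, hlast⟩, hsnd⟩ := h
  dsimp only at hcfg hmax hocc
  have hd1 : d ((m:ℤ) - 1) = true := hlast
  have hd2 : d ((m:ℤ) - 2) = true := hsnd
  have hm2 : 2 ≤ m := by have := (true_range hcfg hd2).1; omega
  have hdm : d (m:ℤ) = false := hcfg _ (Or.inr le_rfl)
  have hlg := (rivMaximal_iff hmax.1).1 hmax
  have hcast : ((m + 1 : ℕ) : ℤ) = (m:ℤ) + 1 := by omega
  refine ⟨⟨?_, ?_, ?_⟩, ?_⟩
  · intro j hj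
    rw [hcast] at hj
    exact hcfg j (by omega)
  · rw [rivMaximal_iff hmax.1]
    intro j h0 h1 hj
    rw [hcast] at h1
    by_cases hjm : j = (m:ℤ)
    · subst hjm
      exact Or.inl ⟨hd2, hd1⟩
    · exact hlg j h0 (by omega) hj
  · show rivieraOccupancy (m+1) d = k
    have o1 := occ_succ m d
    rw [if_neg (by rw [hdm]; simp)] at o1
    omega
  · show ¬ (d (((m+1:ℕ):ℤ) - 1) = true)
    rw [show ((m+1:ℕ):ℤ) - 1 = (m:ℤ) by omega, hdm]
    simp

lemma eqC (k : ℕ) (hk : 1 ≤ k) :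
    Nat.card {p : ℕ × (ℤ → Bool) // CP k p} = Nat.card {p : ℕ × (ℤ → Bool) // BP k p} := by
  apply Nat.card_congr
  refine ⟨fun x => ⟨(x.1.1 - 1, x.1.2), C_to_B hk x.2⟩,
          fun y => ⟨(y.1.1 + 1, y.1.2), B_to_C y.2⟩, ?_, ?_⟩
  · rintro ⟨⟨n, c⟩, hx⟩
    have hn1 : 1 ≤ n := le_trans hk (hx.1.2.2 ▸ occ_le n c)
    exact Subtype.ext (Prod.ext (by simp; omega) rfl)
  · rintro ⟨⟨m, d⟩, hy⟩
    exact Subtype.ext (Prod.ext (by simp) rfl)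

lemma A_to_T {k : ℕ} (hk : 1 ≤ k) {n : ℕ} {c : ℤ → Bool} (h : AP (k+1) (n, c)) :
    TP k (n - 2, trunc (n - 2) c) := by
  obtain ⟨⟨⟨hcfg, hmax, hocc⟩, hlast⟩, hsnd⟩ := h
  dsimp only at hcfg hmax hocc
  have hc1 : c ((n:ℤ) - 1) = true := hlast
  have hc2 : c ((n:ℤ) - 2) = false := bnot_true hsnd
  have hn2 : 2 ≤ n := by have := hocc ▸ occ_le n c; omega
  have hlg := (rivMaximal_iff hmax.1).1 hmax
  have lg := hlg ((n:ℤ) - 2) (by omega) (by omega) hc2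
  have e0 : c ((n:ℤ) - 2 + 2) = false := hcfg _ (Or.inr (by omega))
  have hc3 : c ((n:ℤ) - 3) = true := by
    rcases lg with ⟨u, v⟩ | ⟨u, v⟩ | ⟨u, v⟩
    · rwa [show (n:ℤ) - 2 - 1 = (n:ℤ) - 3 by ring] at v
    · rwa [show (n:ℤ) - 2 - 1 = (n:ℤ) - 3 by ring] at u
    · rw [e0] at v; exact absurd v (by simp)
  have hn3 : 3 ≤ n := by have := (true_range hcfg hc3).1; omega
  have hcast : ((n - 2 : ℕ) : ℤ) = (n:ℤ) - 2 := by omega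
  refine ⟨⟨?_, ?_, ?_⟩, ?_⟩
  · exact trunc_config hcfg
  · rw [rivMaximal_iff (trunc_perm hmax.1)]
    intro j h0 h1 hj
    rw [hcast] at h1
    have hcj : c j = false :=
      (trunc_lt (by omega : j < ((n-2:ℕ):ℤ))).symm.trans hj
    have hj3 : j ≠ (n:ℤ) - 3 := by
      intro hh; rw [hh, hc3] at hcj; exact absurd hcj (by simp)
    apply trunc_localgood (by rw [hcast]; exact hc2) (by omega)
    exact hlg j h0 (by omega) hcj
  · show rivieraOccupancy (n-2) (trunc (n-2) c) = k
    have o1 := occ_succ (n - 2 + 1) c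
    have o2 := occ_succ (n - 2) c
    rw [show n - 2 + 1 + 1 = n by omega] at o1
    rw [show ((n - 2 + 1 : ℕ) : ℤ) = (n:ℤ) - 1 by omega, if_pos hc1] at o1
    rw [hcast, if_neg (by rw [hc2]; simp)] at o2
    rw [trunc_occ]
    omega
  · show trunc (n-2) c (((n-2:ℕ):ℤ) - 1) = true
    rw [show ((n-2:ℕ):ℤ) - 1 = (n:ℤ) - 3 by omega, trunc_lt (by omega)]
    exact hc3

lemma T_to_A {k : ℕ} (hk : 1 ≤ k) {m : ℕ} {d : ℤ → Bool} (h : TP k (m, d)) :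
    AP (k+1) (m + 2, ext2 d ((m:ℤ) + 1) ((m:ℤ) + 1)) := by
  obtain ⟨⟨hcfg, hmax, hocc⟩, hlast⟩ := h
  dsimp only at hcfg hmax hocc
  have hd1 : d ((m:ℤ) - 1) = true := hlast
  have hm1 : 1 ≤ m := by have := (true_range hcfg hd1).1; omega
  have pad : ∀ x : ℤ, (m:ℤ) ≤ x → d x = false := fun x hx => hcfg x (Or.inr hx)
  have hlg := (rivMaximal_iff hmax.1).1 hmax
  have hcast : ((m + 2 : ℕ) : ℤ) = (m:ℤ) + 2 := by omega
  set e := ext2 d ((m:ℤ) + 1) ((m:ℤ) + 1) with he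
  have hperm : RivieraPermissible e := by
    rintro ⟨i, h1, h2, h3⟩
    rw [ext2_true_iff] at h1 h2 h3
    rcases h2 with h2 | h2 | h2
    · have hi := true_range hcfg h2
      have t1 : d (i - 1) = true := by
        rcases h1 with h1 | h1 | h1
        · exact h1
        · omega
        · omega
      have t3 : d (i + 1) = true := by
        rcases h3 with h3 | h3 | h3
        · exact h3
        · omega
        · omega
      exact hmax.1 ⟨i, t1, h2, t3⟩
    all_goals {
      rcases h1 with h1 | h1 | h1
      · rw [show i - 1 = (m:ℤ) by omega, pad (m:ℤ) le_rfl] at h1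
        exact absurd h1 (by simp)
      · omega
      · omega }
  have hecfg : RivieraConfig (m + 2) e := by
    intro j hj
    rw [hcast] at hj
    rw [he, ext2_eq (by omega) (by omega)]
    exact hcfg j (by omega)
  refine ⟨⟨⟨hecfg, ?_, ?_⟩, ?_⟩, ?_⟩
  · rw [rivMaximal_iff hperm]
    intro j h0 h1 hj
    rw [hcast] at h1
    have hjne : j ≠ (m:ℤ) + 1 := by
      intro hh
      rw [hh] at hj
      rw [show e ((m:ℤ)+1) = true from ext2_true_iff.mpr (Or.inr (Or.inl rfl))] at hj
      exact absurd hj (by simp)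
    by_cases hjm : j < (m:ℤ)
    · have hdj : d j = false :=
        (ext2_eq (by omega : j ≠ (m:ℤ)+1) (by omega : j ≠ (m:ℤ)+1)).symm.trans hj
      exact localgood_mono (ext2_ge d _ _) (hlg j h0 hjm hdj)
    · have hjm' : j = (m:ℤ) := by omega
      subst hjm'
      refine Or.inr (Or.inl ⟨?_, ?_⟩)
      · exact ext2_ge d _ _ _ hd1
      · exact ext2_true_iff.mpr (Or.inr (Or.inl rfl))
  · show rivieraOccupancy (m+2) e = k + 1
    have o1 := occ_succ (m + 1) e
    have o2 := occ_succ m e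
    rw [show m + 1 + 1 = m + 2 by omega] at o1
    rw [show ((m + 1 : ℕ) : ℤ) = (m:ℤ) + 1 by omega,
      if_pos (ext2_true_iff.mpr (Or.inr (Or.inl rfl)))] at o1
    rw [if_neg (by rw [he, ext2_eq (by omega) (by omega), pad (m:ℤ) le_rfl]; simp)] at o2
    have oc : rivieraOccupancy m e = rivieraOccupancy m d :=
      occ_congr m (fun x _ hx => by rw [he, ext2_eq (by omega) (by omega)])
    omega
  · show e (((m+2:ℕ):ℤ) - 1) = true
    rw [show ((m+2:ℕ):ℤ) - 1 = (m:ℤ) + 1 by omega]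
    exact ext2_true_iff.mpr (Or.inr (Or.inl rfl))
  · show ¬ (e (((m+2:ℕ):ℤ) - 2) = true)
    rw [show ((m+2:ℕ):ℤ) - 2 = (m:ℤ) by omega, he,
      ext2_eq (by omega) (by omega), pad (m:ℤ) le_rfl]
    simp

lemma eqA (k : ℕ) (hk : 1 ≤ k) :
    Nat.card {p : ℕ × (ℤ → Bool) // AP (k+1) p} = Nat.card {p : ℕ × (ℤ → Bool) // TP k p} := by
  apply Nat.card_congr
  refine ⟨fun x => ⟨(x.1.1 - 2, trunc (x.1.1 - 2) x.1.2), A_to_T hk x.2⟩,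
          fun y => ⟨(y.1.1 + 2, ext2 y.1.2 ((y.1.1:ℤ) + 1) ((y.1.1:ℤ) + 1)), T_to_A hk y.2⟩,
          ?_, ?_⟩
  · rintro ⟨⟨n, c⟩, hx⟩
    obtain ⟨⟨⟨hcfg, hmax, hocc⟩, hlast⟩, hsnd⟩ := hx
    dsimp only at hcfg hmax hocc
    have hc1 : c ((n:ℤ) - 1) = true := hlast
    have hc2 : c ((n:ℤ) - 2) = false := bnot_true hsnd
    have hn2 : 2 ≤ n := by have := hocc ▸ occ_le n c; omega
    apply Subtype.ext
    refine Prod.ext (by simp; omega) ?_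
    show ext2 (trunc (n-2) c) (((n-2:ℕ):ℤ) + 1) (((n-2:ℕ):ℤ) + 1) = c
    funext j
    have hcast : ((n-2:ℕ):ℤ) = (n:ℤ) - 2 := by omega
    by_cases hA : j = (n:ℤ) - 1
    · rw [show ext2 (trunc (n-2) c) (((n-2:ℕ):ℤ)+1) (((n-2:ℕ):ℤ)+1) j = true from
        ext2_true_iff.mpr (Or.inr (Or.inl (by omega))), hA, hc1]
    · rw [ext2_eq (by omega) (by omega)]
      by_cases hB : j < (n:ℤ) - 2
      · rw [trunc_lt (by omega)]
      · by_cases hC : j = (n:ℤ) - 2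
        · rw [trunc_ge (by omega), hC, hc2]
        · rw [trunc_ge (by omega), hcfg j (Or.inr (by omega))]
  · rintro ⟨⟨m, d⟩, hy⟩
    obtain ⟨⟨hcfg, hmax, hocc⟩, hlast⟩ := hy
    dsimp only at hcfg hmax hocc
    apply Subtype.ext
    refine Prod.ext (by simp) ?_
    show trunc (m + 2 - 2) (ext2 d ((m:ℤ)+1) ((m:ℤ)+1)) = d
    funext j
    rw [show m + 2 - 2 = m by omega]
    by_cases hA : j < (m:ℤ)
    · rw [trunc_lt hA, ext2_eq (by omega) (by omega)]
    · rw [trunc_ge (by omega), hcfg j (Or.inr (by omega))]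
lemma B_facts {k : ℕ} (hk : 1 ≤ k) {n : ℕ} {c : ℤ → Bool} (h : BP (k+2) (n, c)) :
    c ((n:ℤ) - 1) = true ∧ c ((n:ℤ) - 2) = true ∧ c ((n:ℤ) - 3) = false ∧ 3 ≤ n ∧
    (c ((n:ℤ) - 4) = true → 4 ≤ n) ∧
    (c ((n:ℤ) - 4) = false → 5 ≤ n ∧ c ((n:ℤ) - 5) = true ∧ c ((n:ℤ) - 6) = true) := by
  obtain ⟨⟨⟨hcfg, hmax, hocc⟩, hlast⟩, hsnd⟩ := h
  dsimp only at hcfg hmax hocc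
  have hc1 : c ((n:ℤ) - 1) = true := hlast
  have hc2 : c ((n:ℤ) - 2) = true := hsnd
  have hn3 : 3 ≤ n := by have := hocc ▸ occ_le n c; omega
  have hlg := (rivMaximal_iff hmax.1).1 hmax
  have hc3 : c ((n:ℤ) - 3) = false := by
    cases hb : c ((n:ℤ) - 3) with
    | false => rfl
    | true =>
      exact absurd ⟨(n:ℤ) - 2,
        by rw [show (n:ℤ) - 2 - 1 = (n:ℤ) - 3 by ring]; exact hb, hc2,
        by rw [show (n:ℤ) - 2 + 1 = (n:ℤ) - 1 by ring]; exact hc1⟩ hmax.1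
  refine ⟨hc1, hc2, hc3, hn3, fun h4 => by have := (true_range hcfg h4).1; omega, ?_⟩
  intro h4
  have hn5 : 5 ≤ n := by
    by_contra hn
    push_neg at hn
    have hsub : (Finset.Ico (0:ℤ) (n:ℤ)).filter (fun j => c j = true) ⊆
        ({(n:ℤ) - 2, (n:ℤ) - 1} : Finset ℤ) := by
      intro x hx
      rw [Finset.mem_filter, Finset.mem_Ico] at hx
      obtain ⟨⟨hx0, hxn⟩, hxt⟩ := hx
      simp only [Finset.mem_insert, Finset.mem_singleton]
      have hx3 : x ≠ (n:ℤ) - 3 := fun hh => by rw [hh, hc3] at hxt; exact absurd hxt (by simp)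
      have hx4 : x ≠ (n:ℤ) - 4 := fun hh => by rw [hh, h4] at hxt; exact absurd hxt (by simp)
      omega
    have hcard : rivieraOccupancy n c ≤ 2 := by
      have h1 := Finset.card_le_card hsub
      have h2 := Finset.card_insert_le ((n:ℤ) - 2) ({(n:ℤ) - 1} : Finset ℤ)
      have h3 : ({(n:ℤ) - 1} : Finset ℤ).card = 1 := Finset.card_singleton _
      unfold rivieraOccupancy
      omega
    omega
  have lg := hlg ((n:ℤ) - 4) (by omega) (by omega) h4
  have e1 : (n:ℤ) - 4 - 2 = (n:ℤ) - 6 := by ring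
  have e2 : (n:ℤ) - 4 - 1 = (n:ℤ) - 5 := by ring
  have e3 : (n:ℤ) - 4 + 1 = (n:ℤ) - 3 := by ring
  have e4 : (n:ℤ) - 4 + 2 = (n:ℤ) - 2 := by ring
  rcases lg with ⟨u, v⟩ | ⟨u, v⟩ | ⟨u, v⟩
  · rw [e1] at u; rw [e2] at v; exact ⟨hn5, v, u⟩
  · rw [e3] at v; rw [hc3] at v; exact absurd v (by simp)
  · rw [e3] at u; rw [hc3] at u; exact absurd u (by simp)

lemma BtoT {k : ℕ} (hk : 1 ≤ k) {n : ℕ} {c : ℤ → Bool} (h : BP (k+2) (n, c))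
    (h4 : c ((n:ℤ) - 4) = true) : TP k (n - 3, trunc (n - 3) c) := by
  obtain ⟨hc1, hc2, hc3, hn3, hf4, -⟩ := B_facts hk h
  have hn4 : 4 ≤ n := hf4 h4
  obtain ⟨⟨⟨hcfg, hmax, hocc⟩, -⟩, -⟩ := h
  dsimp only at hcfg hmax hocc
  have hlg := (rivMaximal_iff hmax.1).1 hmax
  have hcast : ((n - 3 : ℕ) : ℤ) = (n:ℤ) - 3 := by omega
  refine ⟨⟨trunc_config hcfg, ?_, ?_⟩, ?_⟩
  · rw [rivMaximal_iff (trunc_perm hmax.1)]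
    intro j h0 h1 hj
    rw [hcast] at h1
    have hcj : c j = false := (trunc_lt (by omega : j < ((n-3:ℕ):ℤ))).symm.trans hj
    have hj4 : j ≠ (n:ℤ) - 4 := fun hh => by rw [hh, h4] at hcj; exact absurd hcj (by simp)
    apply trunc_localgood (by rw [hcast]; exact hc3) (by omega)
    exact hlg j h0 (by omega) hcj
  · show rivieraOccupancy (n-3) (trunc (n-3) c) = k
    have o1 := occ_succ (n - 3 + 2) c
    have o2 := occ_succ (n - 3 + 1) c
    have o3 := occ_succ (n - 3) c
    rw [show n - 3 + 2 + 1 = n by omega] at o1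
    rw [show n - 3 + 1 + 1 = n - 3 + 2 by omega] at o2
    rw [show ((n - 3 + 2 : ℕ) : ℤ) = (n:ℤ) - 1 by omega, if_pos hc1] at o1
    rw [show ((n - 3 + 1 : ℕ) : ℤ) = (n:ℤ) - 2 by omega, if_pos hc2] at o2
    rw [hcast, if_neg (by rw [hc3]; simp)] at o3
    rw [trunc_occ]
    omega
  · show trunc (n-3) c (((n-3:ℕ):ℤ) - 1) = true
    rw [show ((n-3:ℕ):ℤ) - 1 = (n:ℤ) - 4 by omega, trunc_lt (by omega)]
    exact h4

lemma BtoB {k : ℕ} (hk : 1 ≤ k) {n : ℕ} {c : ℤ → Bool} (h : BP (k+2) (n, c))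
    (h4 : c ((n:ℤ) - 4) = false) : BP k (n - 4, trunc (n - 4) c) := by
  obtain ⟨hc1, hc2, hc3, hn3, -, hf4⟩ := B_facts hk h
  obtain ⟨hn5, hc5, hc6⟩ := hf4 h4
  obtain ⟨⟨⟨hcfg, hmax, hocc⟩, -⟩, -⟩ := h
  dsimp only at hcfg hmax hocc
  have hlg := (rivMaximal_iff hmax.1).1 hmax
  have hcast : ((n - 4 : ℕ) : ℤ) = (n:ℤ) - 4 := by omega
  refine ⟨⟨⟨trunc_config hcfg, ?_, ?_⟩, ?_⟩, ?_⟩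
  · rw [rivMaximal_iff (trunc_perm hmax.1)]
    intro j h0 h1 hj
    rw [hcast] at h1
    have hcj : c j = false := (trunc_lt (by omega : j < ((n-4:ℕ):ℤ))).symm.trans hj
    have hj5 : j ≠ (n:ℤ) - 5 := fun hh => by rw [hh, hc5] at hcj; exact absurd hcj (by simp)
    have hj6 : j ≠ (n:ℤ) - 6 := fun hh => by rw [hh, hc6] at hcj; exact absurd hcj (by simp)
    apply trunc_localgood (by rw [hcast]; exact h4) (by omega)
    exact hlg j h0 (by omega) hcj
  · show rivieraOccupancy (n-4) (trunc (n-4) c) = k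
    have o1 := occ_succ (n - 4 + 3) c
    have o2 := occ_succ (n - 4 + 2) c
    have o3 := occ_succ (n - 4 + 1) c
    have o4 := occ_succ (n - 4) c
    rw [show n - 4 + 3 + 1 = n by omega] at o1
    rw [show n - 4 + 2 + 1 = n - 4 + 3 by omega] at o2
    rw [show n - 4 + 1 + 1 = n - 4 + 2 by omega] at o3
    rw [show ((n - 4 + 3 : ℕ) : ℤ) = (n:ℤ) - 1 by omega, if_pos hc1] at o1
    rw [show ((n - 4 + 2 : ℕ) : ℤ) = (n:ℤ) - 2 by omega, if_pos hc2] at o2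
    rw [show ((n - 4 + 1 : ℕ) : ℤ) = (n:ℤ) - 3 by omega, if_neg (by rw [hc3]; simp)] at o3
    rw [hcast, if_neg (by rw [h4]; simp)] at o4
    rw [trunc_occ]
    omega
  · show trunc (n-4) c (((n-4:ℕ):ℤ) - 1) = true
    rw [show ((n-4:ℕ):ℤ) - 1 = (n:ℤ) - 5 by omega, trunc_lt (by omega)]
    exact hc5
  · show trunc (n-4) c (((n-4:ℕ):ℤ) - 2) = true
    rw [show ((n-4:ℕ):ℤ) - 2 = (n:ℤ) - 6 by omega, trunc_lt (by omega)]
    exact hc6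

lemma TtoB {k : ℕ} (hk : 1 ≤ k) {m : ℕ} {d : ℤ → Bool} (h : TP k (m, d)) :
    BP (k+2) (m + 3, ext2 d ((m:ℤ) + 1) ((m:ℤ) + 2)) := by
  obtain ⟨⟨hcfg, hmax, hocc⟩, hlast⟩ := h
  dsimp only at hcfg hmax hocc
  have hd1 : d ((m:ℤ) - 1) = true := hlast
  have hm1 : 1 ≤ m := by have := (true_range hcfg hd1).1; omega
  have pad : ∀ x : ℤ, (m:ℤ) ≤ x → d x = false := fun x hx => hcfg x (Or.inr hx)
  have hlg := (rivMaximal_iff hmax.1).1 hmax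
  have hcast : ((m + 3 : ℕ) : ℤ) = (m:ℤ) + 3 := by omega
  set e := ext2 d ((m:ℤ) + 1) ((m:ℤ) + 2) with he
  have hperm : RivieraPermissible e := by
    rintro ⟨i, h1, h2, h3⟩
    rw [ext2_true_iff] at h1 h2 h3
    rcases h2 with h2 | h2 | h2
    · have hi := true_range hcfg h2
      have t1 : d (i - 1) = true := by rcases h1 with h1 | h1 | h1; exacts [h1, by omega, by omega]
      have t3 : d (i + 1) = true := by rcases h3 with h3 | h3 | h3; exacts [h3, by omega, by omega]
      exact hmax.1 ⟨i, t1, h2, t3⟩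
    · rcases h1 with h1 | h1 | h1
      · rw [show i - 1 = (m:ℤ) by omega, pad _ le_rfl] at h1; exact absurd h1 (by simp)
      · omega
      · omega
    · rcases h3 with h3 | h3 | h3
      · rw [show i + 1 = (m:ℤ) + 3 by omega, pad _ (by omega)] at h3; exact absurd h3 (by simp)
      · omega
      · omega
  have hecfg : RivieraConfig (m + 3) e := by
    intro j hj
    rw [hcast] at hj
    rw [he, ext2_eq (by omega) (by omega)]
    exact hcfg j (by omega)
  refine ⟨⟨⟨hecfg, ?_, ?_⟩, ?_⟩, ?_⟩
  · rw [rivMaximal_iff hperm]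
    intro j h0 h1 hj
    rw [hcast] at h1
    have hjm1 : j ≠ (m:ℤ) + 1 := fun hh => by
      have : e j = true := ext2_true_iff.mpr (Or.inr (Or.inl hh))
      rw [hj] at this; exact absurd this (by simp)
    have hjm2 : j ≠ (m:ℤ) + 2 := fun hh => by
      have : e j = true := ext2_true_iff.mpr (Or.inr (Or.inr hh))
      rw [hj] at this; exact absurd this (by simp)
    by_cases hjm : j < (m:ℤ)
    · have hdj : d j = false := (ext2_eq (by omega) (by omega)).symm.trans hj
      exact localgood_mono (ext2_ge d _ _) (hlg j h0 hjm hdj)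
    · have hjm' : j = (m:ℤ) := by omega
      subst hjm'
      exact Or.inr (Or.inr ⟨ext2_true_iff.mpr (Or.inr (Or.inl (by omega))),
        ext2_true_iff.mpr (Or.inr (Or.inr (by omega)))⟩)
  · show rivieraOccupancy (m+3) e = k + 2
    have o1 := occ_succ (m + 2) e
    have o2 := occ_succ (m + 1) e
    have o3 := occ_succ m e
    rw [show m + 2 + 1 = m + 3 by omega] at o1
    rw [show m + 1 + 1 = m + 2 by omega] at o2
    rw [show ((m + 2 : ℕ) : ℤ) = (m:ℤ) + 2 by omega,
      if_pos (ext2_true_iff.mpr (Or.inr (Or.inr rfl)))] at o1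
    rw [show ((m + 1 : ℕ) : ℤ) = (m:ℤ) + 1 by omega,
      if_pos (ext2_true_iff.mpr (Or.inr (Or.inl rfl)))] at o2
    rw [if_neg (by rw [he, ext2_eq (by omega) (by omega), pad _ le_rfl]; simp)] at o3
    have oc : rivieraOccupancy m e = rivieraOccupancy m d :=
      occ_congr m (fun x _ hx => by rw [he, ext2_eq (by omega) (by omega)])
    omega
  · show e (((m+3:ℕ):ℤ) - 1) = true
    exact ext2_true_iff.mpr (Or.inr (Or.inr (by omega)))
  · show e (((m+3:ℕ):ℤ) - 2) = true
    exact ext2_true_iff.mpr (Or.inr (Or.inl (by omega)))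

lemma BtoB' {k : ℕ} (hk : 1 ≤ k) {m : ℕ} {d : ℤ → Bool} (h : BP k (m, d)) :
    BP (k+2) (m + 4, ext2 d ((m:ℤ) + 2) ((m:ℤ) + 3)) := by
  obtain ⟨⟨⟨hcfg, hmax, hocc⟩, hlast⟩, hsnd⟩ := h
  dsimp only at hcfg hmax hocc
  have hd1 : d ((m:ℤ) - 1) = true := hlast
  have hd2 : d ((m:ℤ) - 2) = true := hsnd
  have hm2 : 2 ≤ m := by have := (true_range hcfg hd2).1; omega
  have pad : ∀ x : ℤ, (m:ℤ) ≤ x → d x = false := fun x hx => hcfg x (Or.inr hx)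
  have hlg := (rivMaximal_iff hmax.1).1 hmax
  have hcast : ((m + 4 : ℕ) : ℤ) = (m:ℤ) + 4 := by omega
  set e := ext2 d ((m:ℤ) + 2) ((m:ℤ) + 3) with he
  have hperm : RivieraPermissible e := by
    rintro ⟨i, h1, h2, h3⟩
    rw [ext2_true_iff] at h1 h2 h3
    rcases h2 with h2 | h2 | h2
    · have hi := true_range hcfg h2
      have t1 : d (i - 1) = true := by rcases h1 with h1 | h1 | h1; exacts [h1, by omega, by omega]
      have t3 : d (i + 1) = true := by rcases h3 with h3 | h3 | h3; exacts [h3, by omega, by omega]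
      exact hmax.1 ⟨i, t1, h2, t3⟩
    · rcases h1 with h1 | h1 | h1
      · rw [show i - 1 = (m:ℤ) + 1 by omega, pad _ (by omega)] at h1; exact absurd h1 (by simp)
      · omega
      · omega
    · rcases h3 with h3 | h3 | h3
      · rw [show i + 1 = (m:ℤ) + 4 by omega, pad _ (by omega)] at h3; exact absurd h3 (by simp)
      · omega
      · omega
  have hecfg : RivieraConfig (m + 4) e := by
    intro j hj
    rw [hcast] at hj
    rw [he, ext2_eq (by omega) (by omega)]
    exact hcfg j (by omega)
  refine ⟨⟨⟨hecfg, ?_, ?_⟩, ?_⟩, ?_⟩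
  · rw [rivMaximal_iff hperm]
    intro j h0 h1 hj
    rw [hcast] at h1
    have hjm2 : j ≠ (m:ℤ) + 2 := fun hh => by
      have : e j = true := ext2_true_iff.mpr (Or.inr (Or.inl hh))
      rw [hj] at this; exact absurd this (by simp)
    have hjm3 : j ≠ (m:ℤ) + 3 := fun hh => by
      have : e j = true := ext2_true_iff.mpr (Or.inr (Or.inr hh))
      rw [hj] at this; exact absurd this (by simp)
    by_cases hjm : j < (m:ℤ)
    · have hdj : d j = false := (ext2_eq (by omega) (by omega)).symm.trans hj
      exact localgood_mono (ext2_ge d _ _) (hlg j h0 hjm hdj)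
    · rcases (by omega : j = (m:ℤ) ∨ j = (m:ℤ) + 1) with hjm' | hjm'
      · subst hjm'
        exact Or.inl ⟨ext2_ge d _ _ _ hd2, ext2_ge d _ _ _ hd1⟩
      · subst hjm'
        exact Or.inr (Or.inr ⟨ext2_true_iff.mpr (Or.inr (Or.inl (by omega))),
          ext2_true_iff.mpr (Or.inr (Or.inr (by omega)))⟩)
  · show rivieraOccupancy (m+4) e = k + 2
    have o1 := occ_succ (m + 3) e
    have o2 := occ_succ (m + 2) e
    have o3 := occ_succ (m + 1) e
    have o4 := occ_succ m e
    rw [show m + 3 + 1 = m + 4 by omega] at o1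
    rw [show m + 2 + 1 = m + 3 by omega] at o2
    rw [show m + 1 + 1 = m + 2 by omega] at o3
    rw [show ((m + 3 : ℕ) : ℤ) = (m:ℤ) + 3 by omega,
      if_pos (ext2_true_iff.mpr (Or.inr (Or.inr rfl)))] at o1
    rw [show ((m + 2 : ℕ) : ℤ) = (m:ℤ) + 2 by omega,
      if_pos (ext2_true_iff.mpr (Or.inr (Or.inl rfl)))] at o2
    rw [show ((m + 1 : ℕ) : ℤ) = (m:ℤ) + 1 by omega,
      if_neg (by rw [he, ext2_eq (by omega) (by omega), pad _ (by omega)]; simp)] at o3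
    rw [if_neg (by rw [he, ext2_eq (by omega) (by omega), pad _ le_rfl]; simp)] at o4
    have oc : rivieraOccupancy m e = rivieraOccupancy m d :=
      occ_congr m (fun x _ hx => by rw [he, ext2_eq (by omega) (by omega)])
    omega
  · show e (((m+4:ℕ):ℤ) - 1) = true
    exact ext2_true_iff.mpr (Or.inr (Or.inr (by omega)))
  · show e (((m+4:ℕ):ℤ) - 2) = true
    exact ext2_true_iff.mpr (Or.inr (Or.inl (by omega)))
lemma eqB (k : ℕ) (hk : 1 ≤ k) :
    Nat.card {p : ℕ × (ℤ → Bool) // BP (k+2) p} =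
    Nat.card {p : ℕ × (ℤ → Bool) // TP k p} + Nat.card {p : ℕ × (ℤ → Bool) // BP k p} := by
  rw [← Nat.card_sum]
  apply Nat.card_congr
  refine ⟨fun x => if h4 : x.1.2 ((x.1.1:ℤ) - 4) = true then
      Sum.inl ⟨(x.1.1 - 3, trunc (x.1.1 - 3) x.1.2), BtoT hk x.2 h4⟩
    else
      Sum.inr ⟨(x.1.1 - 4, trunc (x.1.1 - 4) x.1.2), BtoB hk x.2 (bnot_true h4)⟩,
    fun y => match y with
      | Sum.inl z => ⟨(z.1.1 + 3, ext2 z.1.2 ((z.1.1:ℤ) + 1) ((z.1.1:ℤ) + 2)), TtoB hk z.2⟩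
      | Sum.inr z => ⟨(z.1.1 + 4, ext2 z.1.2 ((z.1.1:ℤ) + 2) ((z.1.1:ℤ) + 3)), BtoB' hk z.2⟩,
    ?_, ?_⟩
  · rintro ⟨⟨n, c⟩, hx⟩
    obtain ⟨hc1, hc2, hc3, hn3, hf4t, hf4f⟩ := B_facts hk hx
    have hcfg : RivieraConfig n c := hx.1.1.1
    dsimp only
    by_cases h4 : c ((n:ℤ) - 4) = true
    · rw [dif_pos h4]
      have hn4 : 4 ≤ n := hf4t h4
      apply Subtype.ext
      refine Prod.ext (by show n - 3 + 3 = n; omega) ?_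
      show ext2 (trunc (n-3) c) (((n-3:ℕ):ℤ) + 1) (((n-3:ℕ):ℤ) + 2) = c
      funext j
      have hcast : ((n-3:ℕ):ℤ) = (n:ℤ) - 3 := by omega
      by_cases hA : j = (n:ℤ) - 2
      · rw [ext2_true_iff.mpr (Or.inr (Or.inl (by omega))), hA, hc2]
      · by_cases hB : j = (n:ℤ) - 1
        · rw [ext2_true_iff.mpr (Or.inr (Or.inr (by omega))), hB, hc1]
        · rw [ext2_eq (by omega) (by omega)]
          by_cases hC : j < (n:ℤ) - 3
          · rw [trunc_lt (by omega)]
          · by_cases hD : j = (n:ℤ) - 3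
            · rw [trunc_ge (by omega), hD, hc3]
            · rw [trunc_ge (by omega), hcfg j (Or.inr (by omega))]
    · rw [dif_neg h4]
      have h4' : c ((n:ℤ) - 4) = false := bnot_true h4
      obtain ⟨hn5, hc5, hc6⟩ := hf4f h4'
      apply Subtype.ext
      refine Prod.ext (by show n - 4 + 4 = n; omega) ?_
      show ext2 (trunc (n-4) c) (((n-4:ℕ):ℤ) + 2) (((n-4:ℕ):ℤ) + 3) = c
      funext j
      have hcast : ((n-4:ℕ):ℤ) = (n:ℤ) - 4 := by omega
      by_cases hA : j = (n:ℤ) - 2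
      · rw [ext2_true_iff.mpr (Or.inr (Or.inl (by omega))), hA, hc2]
      · by_cases hB : j = (n:ℤ) - 1
        · rw [ext2_true_iff.mpr (Or.inr (Or.inr (by omega))), hB, hc1]
        · rw [ext2_eq (by omega) (by omega)]
          by_cases hC : j < (n:ℤ) - 4
          · rw [trunc_lt (by omega)]
          · by_cases hD : j = (n:ℤ) - 4
            · rw [trunc_ge (by omega), hD, h4']
            · by_cases hE : j = (n:ℤ) - 3
              · rw [trunc_ge (by omega), hE, hc3]
              · rw [trunc_ge (by omega), hcfg j (Or.inr (by omega))]
  · rintro (⟨⟨m, d⟩, hz⟩ | ⟨⟨m, d⟩, hz⟩)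
    · have hcfg : RivieraConfig m d := hz.1.1
      have hd1 : d ((m:ℤ) - 1) = true := hz.2
      dsimp only
      have hcond : ext2 d ((m:ℤ) + 1) ((m:ℤ) + 2) (((m+3:ℕ):ℤ) - 4) = true := by
        rw [show ((m+3:ℕ):ℤ) - 4 = (m:ℤ) - 1 by omega, ext2_eq (by omega) (by omega)]
        exact hd1
      rw [dif_pos hcond]
      apply congrArg Sum.inl
      apply Subtype.ext
      refine Prod.ext (by show m + 3 - 3 = m; omega) ?_
      show trunc (m + 3 - 3) (ext2 d ((m:ℤ) + 1) ((m:ℤ) + 2)) = d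
      rw [show m + 3 - 3 = m by omega]
      funext j
      by_cases hA : j < (m:ℤ)
      · rw [trunc_lt hA, ext2_eq (by omega) (by omega)]
      · rw [trunc_ge (by omega), hcfg j (Or.inr (by omega))]
    · have hcfg : RivieraConfig m d := hz.1.1.1
      dsimp only
      have hcond : ext2 d ((m:ℤ) + 2) ((m:ℤ) + 3) (((m+4:ℕ):ℤ) - 4) = false := by
        rw [show ((m+4:ℕ):ℤ) - 4 = (m:ℤ) by omega, ext2_eq (by omega) (by omega)]
        exact hcfg _ (Or.inr le_rfl)
      rw [dif_neg (by rw [hcond]; simp)]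
      apply congrArg Sum.inr
      apply Subtype.ext
      refine Prod.ext (by show m + 4 - 4 = m; omega) ?_
      show trunc (m + 4 - 4) (ext2 d ((m:ℤ) + 2) ((m:ℤ) + 3)) = d
      rw [show m + 4 - 4 = m by omega]
      funext j
      by_cases hA : j < (m:ℤ)
      · rw [trunc_lt hA, ext2_eq (by omega) (by omega)]
      · rw [trunc_ge (by omega), hcfg j (Or.inr (by omega))]
/-! ### base cases -/

lemma T1_wf : TP 1 (1, fun j => decide (j = 0)) := by
  refine ⟨⟨?_, ?_, ?_⟩, ?_⟩
  · intro j hj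
    simp only at hj ⊢
    rw [decide_eq_false_iff_not]
    intro hh
    subst hh
    simp at hj
  · show RivieraMaximal 1 (fun j => decide (j = 0))
    rw [rivMaximal_iff (by rintro ⟨i, h1, h2, h3⟩; simp only [decide_eq_true_eq] at h1 h2; omega)]
    intro j h0 h1 hj
    simp only [Nat.cast_one] at h1
    rw [show j = 0 by omega] at hj
    simp at hj
  · show rivieraOccupancy 1 (fun j => decide (j = 0)) = 1
    decide
  · show (fun j : ℤ => decide (j = 0)) (((1:ℕ):ℤ) - 1) = true
    decide

lemma T1_classify {n : ℕ} {c : ℤ → Bool} (h : TP 1 (n, c)) :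
    n = 1 ∧ c = fun j => decide (j = 0) := by
  obtain ⟨⟨hcfg, hmax, hocc⟩, hlast⟩ := h
  dsimp only at hcfg hmax hocc
  have hc1 : c ((n:ℤ) - 1) = true := hlast
  have hn1 : 1 ≤ n := by have := hocc ▸ occ_le n c; omega
  have hlg := (rivMaximal_iff hmax.1).1 hmax
  unfold rivieraOccupancy at hocc
  obtain ⟨a, ha⟩ := Finset.card_eq_one.mp hocc
  have hmem : (n:ℤ) - 1 ∈ ({a} : Finset ℤ) := by
    rw [← ha, Finset.mem_filter, Finset.mem_Ico]
    exact ⟨⟨by omega, by omega⟩, hc1⟩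
  rw [Finset.mem_singleton] at hmem
  have htrue : ∀ j : ℤ, c j = true → j = (n:ℤ) - 1 := by
    intro j hj
    have hr := true_range hcfg hj
    have : j ∈ ({a} : Finset ℤ) := by
      rw [← ha, Finset.mem_filter, Finset.mem_Ico]
      exact ⟨⟨hr.1, hr.2⟩, hj⟩
    rw [Finset.mem_singleton] at this
    omega
  have hn : n = 1 := by
    by_contra hne
    have hn2 : 2 ≤ n := by omega
    have hc2 : c ((n:ℤ) - 2) = false := by
      cases hb : c ((n:ℤ) - 2) with
      | false => rfl
      | true => have := htrue _ hb; omega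
    have lg := hlg ((n:ℤ) - 2) (by omega) (by omega) hc2
    rcases lg with ⟨u, v⟩ | ⟨u, v⟩ | ⟨u, v⟩
    · have := htrue _ v; omega
    · have := htrue _ u; omega
    · have := htrue _ v; omega
  subst hn
  refine ⟨rfl, funext fun j => ?_⟩
  by_cases hj : j = 0
  · subst hj
    have h0 : c 0 = true := by rw [show (0:ℤ) = ((1:ℕ):ℤ) - 1 by norm_num]; exact hc1
    rw [h0]
    simp
  · cases hb : c j with
    | true => have := htrue _ hb; simp at this; omega
    | false => simp [hj]

lemma t1_card : Nat.card {p : ℕ × (ℤ → Bool) // TP 1 p} = 1 := by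
  rw [Nat.card_eq_one_iff_unique]
  constructor
  · constructor
    intro x y
    apply Subtype.ext
    have hx := T1_classify (show TP 1 (x.1.1, x.1.2) from x.2)
    have hy := T1_classify (show TP 1 (y.1.1, y.1.2) from y.2)
    exact Prod.ext (hx.1.trans hy.1.symm) (hx.2.trans hy.2.symm)
  · exact ⟨⟨(1, fun j => decide (j = 0)), T1_wf⟩⟩

lemma b1_card : Nat.card {p : ℕ × (ℤ → Bool) // BP 1 p} = 0 := by
  have : IsEmpty {p : ℕ × (ℤ → Bool) // BP 1 p} := by
    constructor
    rintro ⟨⟨n, c⟩, ⟨⟨hcfg, hmax, hocc⟩, hlast⟩, hsnd⟩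
    dsimp only at hcfg hmax hocc
    have hc1 : c ((n:ℤ) - 1) = true := hlast
    have hc2 : c ((n:ℤ) - 2) = true := hsnd
    have hn2 : 2 ≤ n := by have := (true_range hcfg hc2).1; omega
    have hsub : ({(n:ℤ) - 2, (n:ℤ) - 1} : Finset ℤ) ⊆
        (Finset.Ico (0:ℤ) (n:ℤ)).filter (fun j => c j = true) := by
      intro x hx
      simp only [Finset.mem_insert, Finset.mem_singleton] at hx
      rw [Finset.mem_filter, Finset.mem_Ico]
      rcases hx with rfl | rfl
      · exact ⟨⟨by omega, by omega⟩, hc2⟩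
      · exact ⟨⟨by omega, by omega⟩, hc1⟩
    have hle := Finset.card_le_card hsub
    rw [Finset.card_insert_of_notMem (by simp), Finset.card_singleton] at hle
    unfold rivieraOccupancy at hocc
    omega
  exact Nat.card_of_isEmpty

lemma B2_wf2 : BP 2 (2, fun j => decide (j = 0) || decide (j = 1)) := by
  refine ⟨⟨⟨?_, ?_, ?_⟩, ?_⟩, ?_⟩
  · intro j hj
    simp only [Nat.cast_ofNat] at hj
    simp only [Bool.or_eq_false_iff, decide_eq_false_iff_not]
    omega
  · show RivieraMaximal 2 (fun j : ℤ => decide (j = 0) || decide (j = 1))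
    rw [rivMaximal_iff (by
      rintro ⟨i, h1, h2, h3⟩
      simp only [Bool.or_eq_true, decide_eq_true_eq] at h1 h3
      omega)]
    intro j h0 h1 hj
    simp only [Nat.cast_ofNat] at h1
    rcases (by omega : j = 0 ∨ j = 1) with rfl | rfl <;> simp at hj
  · show rivieraOccupancy 2 (fun j : ℤ => decide (j = 0) || decide (j = 1)) = 2
    decide
  · show (fun j : ℤ => decide (j = 0) || decide (j = 1)) (((2:ℕ):ℤ) - 1) = true
    decide
  · show (fun j : ℤ => decide (j = 0) || decide (j = 1)) (((2:ℕ):ℤ) - 2) = true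
    decide

lemma B2_wf3 : BP 2 (3, fun j => decide (j = 1) || decide (j = 2)) := by
  have hperm : RivieraPermissible (fun j : ℤ => decide (j = 1) || decide (j = 2)) := by
    rintro ⟨i, h1, h2, h3⟩
    simp only [Bool.or_eq_true, decide_eq_true_eq] at h1 h3
    omega
  refine ⟨⟨⟨?_, ?_, ?_⟩, ?_⟩, ?_⟩
  · intro j hj
    simp only [Nat.cast_ofNat] at hj
    simp only [Bool.or_eq_false_iff, decide_eq_false_iff_not]
    omega
  · show RivieraMaximal 3 (fun j : ℤ => decide (j = 1) || decide (j = 2))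
    rw [rivMaximal_iff hperm]
    intro j h0 h1 hj
    simp only [Nat.cast_ofNat] at h1
    rcases (by omega : j = 0 ∨ j = 1 ∨ j = 2) with rfl | rfl | rfl
    · refine Or.inr (Or.inr ⟨?_, ?_⟩) <;> decide
    · simp at hj
    · simp at hj
  · show rivieraOccupancy 3 (fun j : ℤ => decide (j = 1) || decide (j = 2)) = 2
    decide
  · show (fun j : ℤ => decide (j = 1) || decide (j = 2)) (((3:ℕ):ℤ) - 1) = true
    decide
  · show (fun j : ℤ => decide (j = 1) || decide (j = 2)) (((3:ℕ):ℤ) - 2) = true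
    decide

lemma B2_classify {n : ℕ} {c : ℤ → Bool} (h : BP 2 (n, c)) :
    (n = 2 ∧ c = fun j => decide (j = 0) || decide (j = 1)) ∨
    (n = 3 ∧ c = fun j => decide (j = 1) || decide (j = 2)) := by
  obtain ⟨⟨⟨hcfg, hmax, hocc⟩, hlast⟩, hsnd⟩ := h
  dsimp only at hcfg hmax hocc
  have hc1 : c ((n:ℤ) - 1) = true := hlast
  have hc2 : c ((n:ℤ) - 2) = true := hsnd
  have hn2 : 2 ≤ n := by have := (true_range hcfg hc2).1; omega
  have hlg := (rivMaximal_iff hmax.1).1 hmax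
  have hsub : ({(n:ℤ) - 2, (n:ℤ) - 1} : Finset ℤ) ⊆
      (Finset.Ico (0:ℤ) (n:ℤ)).filter (fun j => c j = true) := by
    intro x hx
    simp only [Finset.mem_insert, Finset.mem_singleton] at hx
    rw [Finset.mem_filter, Finset.mem_Ico]
    rcases hx with rfl | rfl
    · exact ⟨⟨by omega, by omega⟩, hc2⟩
    · exact ⟨⟨by omega, by omega⟩, hc1⟩
  have hpairc : ({(n:ℤ) - 2, (n:ℤ) - 1} : Finset ℤ).card = 2 := by
    rw [Finset.card_insert_of_notMem (by simp), Finset.card_singleton]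
  have hfeq : ({(n:ℤ) - 2, (n:ℤ) - 1} : Finset ℤ) =
      (Finset.Ico (0:ℤ) (n:ℤ)).filter (fun j => c j = true) := by
    apply Finset.eq_of_subset_of_card_le hsub
    unfold rivieraOccupancy at hocc
    omega
  have htrue : ∀ j : ℤ, c j = true ↔ (j = (n:ℤ) - 2 ∨ j = (n:ℤ) - 1) := by
    intro j
    constructor
    · intro hj
      have hr := true_range hcfg hj
      have : j ∈ ({(n:ℤ) - 2, (n:ℤ) - 1} : Finset ℤ) := by
        rw [hfeq, Finset.mem_filter, Finset.mem_Ico]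
        exact ⟨⟨hr.1, hr.2⟩, hj⟩
      simpa using this
    · rintro (rfl | rfl)
      · exact hc2
      · exact hc1
  have hn3 : n ≤ 3 := by
    by_contra hn
    push_neg at hn
    have hc4 : c ((n:ℤ) - 4) = false := by
      cases hb : c ((n:ℤ) - 4) with
      | false => rfl
      | true => have := (htrue _).1 hb; omega
    have lg := hlg ((n:ℤ) - 4) (by omega) (by omega) hc4
    rcases lg with ⟨u, v⟩ | ⟨u, v⟩ | ⟨u, v⟩
    · have := (htrue _).1 u; omega
    · have := (htrue _).1 u; omega
    · have := (htrue _).1 u; omega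
  rcases (by omega : n = 2 ∨ n = 3) with rfl | rfl
  · left
    refine ⟨rfl, funext fun j => ?_⟩
    cases hb : c j with
    | true =>
      have := (htrue j).1 hb
      simp only [Nat.cast_ofNat] at this
      symm
      simp only [Bool.or_eq_true, decide_eq_true_eq]
      omega
    | false =>
      have hne : ¬(j = ((2:ℕ):ℤ) - 2 ∨ j = ((2:ℕ):ℤ) - 1) := by
        intro hor
        rw [(htrue j).2 hor] at hb
        cases hb
      symm
      simp only [Bool.or_eq_false_iff, decide_eq_false_iff_not]
      exact ⟨fun hh => hne (Or.inl (by omega)), fun hh => hne (Or.inr (by omega))⟩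
  · right
    refine ⟨rfl, funext fun j => ?_⟩
    cases hb : c j with
    | true =>
      have := (htrue j).1 hb
      simp only [Nat.cast_ofNat] at this
      symm
      simp only [Bool.or_eq_true, decide_eq_true_eq]
      omega
    | false =>
      have hne : ¬(j = ((3:ℕ):ℤ) - 2 ∨ j = ((3:ℕ):ℤ) - 1) := by
        intro hor
        rw [(htrue j).2 hor] at hb
        cases hb
      symm
      simp only [Bool.or_eq_false_iff, decide_eq_false_iff_not]
      exact ⟨fun hh => hne (Or.inl (by omega)), fun hh => hne (Or.inr (by omega))⟩

lemma b2_card : Nat.card {p : ℕ × (ℤ → Bool) // BP 2 p} = 2 := by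
  rw [Nat.card_eq_two_iff]
  refine ⟨⟨(2, fun j => decide (j = 0) || decide (j = 1)), B2_wf2⟩,
          ⟨(3, fun j => decide (j = 1) || decide (j = 2)), B2_wf3⟩, ?_, ?_⟩
  · intro hcon
    have := congrArg (fun z => z.1.1) hcon
    simp at this
  · rw [Set.eq_univ_iff_forall]
    intro z
    rcases B2_classify (show BP 2 (z.1.1, z.1.2) from z.2) with ⟨hn, hc⟩ | ⟨hn, hc⟩
    · left
      apply Subtype.ext
      exact Prod.ext hn hc
    · right
      rw [Set.mem_singleton_iff]
      apply Subtype.ext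
      exact Prod.ext hn hc
/-- `hCount k` = the number of maximal Riviera configurations (of any length)
with exactly `k` occupied lots. -/
noncomputable def hCount (k : ℕ) : ℕ :=
  Nat.card {p : ℕ × (ℤ → Bool) //
    RivieraConfig p.1 p.2 ∧ RivieraMaximal p.1 p.2 ∧ rivieraOccupancy p.1 p.2 = k}

theorem hCount_recurrence :
    hCount 1 = 1 ∧ hCount 2 = 5 ∧ hCount 3 = 5 ∧
    ∀ k : ℕ, 4 ≤ k →
      hCount k + hCount (k - 3) = hCount (k - 1) + 2 * hCount (k - 2) := by
  have key : ∀ k : ℕ, hCount k =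
      Nat.card {p : ℕ × (ℤ → Bool) // TP k p} + Nat.card {p : ℕ × (ℤ → Bool) // CP k p} := by
    intro k
    have hOk : hCount k = Nat.card {p : ℕ × (ℤ → Bool) // OkP k p} := rfl
    rw [hOk, hsplit k]
  have h1 : hCount 1 = 1 := by
    rw [key 1, eqC 1 le_rfl, t1_card, b1_card]
  have t2 : Nat.card {p : ℕ × (ℤ → Bool) // TP 2 p} = 3 := by
    have ha := eqA 1 le_rfl
    rw [show (1+1 : ℕ) = 2 by norm_num] at ha
    rw [tsplit 2, b2_card, ha, t1_card]
  have b3 : Nat.card {p : ℕ × (ℤ → Bool) // BP 3 p} = 1 := by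
    have hb := eqB 1 le_rfl
    rw [show (1+2 : ℕ) = 3 by norm_num] at hb
    rw [hb, t1_card, b1_card]
  have h2 : hCount 2 = 5 := by
    rw [key 2, eqC 2 (by norm_num), t2, b2_card]
  have t3 : Nat.card {p : ℕ × (ℤ → Bool) // TP 3 p} = 4 := by
    have ha := eqA 2 (by norm_num)
    rw [show (2+1 : ℕ) = 3 by norm_num] at ha
    rw [tsplit 3, b3, ha, t2]
  have h3 : hCount 3 = 5 := by
    rw [key 3, eqC 3 (by norm_num), t3, b3]
  refine ⟨h1, h2, h3, ?_⟩
  intro k hk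
  obtain ⟨j, rfl⟩ : ∃ j, k = j + 4 := ⟨k - 4, by omega⟩
  rw [show j + 4 - 3 = j + 1 by omega, show j + 4 - 1 = j + 3 by omega,
      show j + 4 - 2 = j + 2 by omega]
  have e1 := key (j+1)
  have e2 := key (j+2)
  have e3 := key (j+3)
  have e4 := key (j+4)
  have c1 := eqC (j+1) (by omega)
  have c2 := eqC (j+2) (by omega)
  have c3 := eqC (j+3) (by omega)
  have c4 := eqC (j+4) (by omega)
  have s3 := tsplit (j+3)
  have s4 := tsplit (j+4)
  have a4 : Nat.card {p : ℕ × (ℤ → Bool) // AP (j+4) p} =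
      Nat.card {p : ℕ × (ℤ → Bool) // TP (j+3) p} := by
    have := eqA (j+3) (by omega)
    rwa [show j+3+1 = j+4 by omega] at this
  have a3 : Nat.card {p : ℕ × (ℤ → Bool) // AP (j+3) p} =
      Nat.card {p : ℕ × (ℤ → Bool) // TP (j+2) p} := by
    have := eqA (j+2) (by omega)
    rwa [show j+2+1 = j+3 by omega] at this
  have b4 : Nat.card {p : ℕ × (ℤ → Bool) // BP (j+4) p} =
      Nat.card {p : ℕ × (ℤ → Bool) // TP (j+2) p} +
      Nat.card {p : ℕ × (ℤ → Bool) // BP (j+2) p} := by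
    have := eqB (j+2) (by omega)
    rwa [show j+2+2 = j+4 by omega] at this
  have b3' : Nat.card {p : ℕ × (ℤ → Bool) // BP (j+3) p} =
      Nat.card {p : ℕ × (ℤ → Bool) // TP (j+1) p} +
      Nat.card {p : ℕ × (ℤ → Bool) // BP (j+1) p} := by
    have := eqB (j+1) (by omega)
    rwa [show j+1+2 = j+3 by omega] at this
  omega
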